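/- Let V and W be finite-dimensional real inner product spaces with dim V = n and dim W = p, and let β : V × V → W be a symmetric bilinear form. For an integer 1 ≤ s ≤ p, define the s-nullity ν_s of β as the maximum over all s-dimensional subspaces U of W of the dimension of {x ∈ V : π_U(β(x,y)) = 0 for all y ∈ V}, where π_U is orthogonal projection onto U. Define R(x,y,z,w) = ⟨β(x,w),β(y,z)⟩ − ⟨β(x,z),β(y,w)⟩. Suppose 2p < n and ν_s < n − 2s for all 1 ≤ s ≤ p. If V = V₁ ⊕ V₂ is an orthogonal splitting such that R(x,y,z,u) = R(x,y,u,v) = R(x,u,v,w) = 0 for all x,y,z ∈ V₁ and u,v,w ∈ V₂, then span{β(x,y) : x ∈ V₁, y ∈ V₂} = 0. -/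

import Mathlib

open Module RealInnerProductSpace

lemma flat_key {E F G : Type*} [NormedAddCommGroup E] [InnerProductSpace ℝ E]
    [NormedAddCommGroup F] [InnerProductSpace ℝ F] [FiniteDimensional ℝ F]
    [NormedAddCommGroup G] [InnerProductSpace ℝ G] [FiniteDimensional ℝ G]
    [FiniteDimensional ℝ E]
    (A : E →ₗ[ℝ] F →ₗ[ℝ] G)
    (hflat : ∀ x y u v, ⟪A x u, A y v⟫ = ⟪A x v, A y u⟫) :
    ∃ N : Submodule ℝ F, (∀ x, ∀ u ∈ N, A x u = 0) ∧
      finrank ℝ F ≤ finrank ℝ G + finrank ℝ N := by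
  classical
  set S : Set ℕ := {r | ∃ x, finrank ℝ (LinearMap.range (A x)) = r} with hS
  have hne : S.Nonempty := ⟨_, 0, rfl⟩
  have hbdd : BddAbove S := by
    refine ⟨finrank ℝ G, ?_⟩
    rintro r ⟨x, rfl⟩
    exact Submodule.finrank_le _
  set r := sSup S with hr
  obtain ⟨x₀, hx₀⟩ : ∃ x, finrank ℝ (LinearMap.range (A x)) = r :=
    Nat.sSup_mem hne hbdd
  have hmax : ∀ y, finrank ℝ (LinearMap.range (A y)) ≤ r := fun y =>
    le_csSup hbdd ⟨y, rfl⟩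
  -- main claim
  have hkey : ∀ (y : E), ∀ k ∈ LinearMap.ker (A x₀), A y k = 0 := by
    intro y k hk
    rw [LinearMap.mem_ker] at hk
    have hperp : ∀ v, ⟪A x₀ v, A y k⟫ = 0 := by
      intro v
      rw [hflat x₀ y v k, hk, inner_zero_left]
    have hmem : A y k ∈ LinearMap.range (A x₀) := by
      by_contra hnotin
      -- choose basis of range
      set R := LinearMap.range (A x₀) with hR
      have b : Basis (Fin r) ℝ R := finBasisOfFinrankEq ℝ R hx₀
      have hv : ∀ i, ∃ w, A x₀ w = (b i : G) := fun i => (b i).2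
      choose v hv using hv
      set f : ℝ → Fin (r + 1) → G :=
        fun t => Fin.cons (A y k) (fun i => A (x₀ + t • y) (v i)) with hf
      have h0 : LinearIndependent ℝ (f 0) := by
        have hf0 : f 0 = Fin.cons (A y k) (fun i => (b i : G)) := by
          funext i
          refine Fin.cases ?_ (fun j => ?_) i <;>
            simp [hf, hv]
        rw [hf0, linearIndependent_fin_cons]
        constructor
        · exact b.linearIndependent.map' R.subtype R.ker_subtype
        · have : Submodule.span ℝ (Set.range fun i => (b i : G)) = R := by
            have := congrArg (Submodule.map R.subtype) b.span_eq
            rwa [Submodule.map_span, Submodule.map_subtype_top, ← Set.range_comp] at this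
          rw [this]; exact hnotin
      have hcont : Continuous f := by
        apply continuous_pi
        intro i
        refine Fin.cases ?_ (fun j => ?_) i
        · simpa [hf] using continuous_const
        · simp only [hf, Fin.cons_succ]
          have : (fun t : ℝ => A (x₀ + t • y) (v j)) =
              (fun e : E => A.flip (v j) e) ∘ (fun t : ℝ => x₀ + t • y) := rfl
          rw [this]
          exact (A.flip (v j)).continuous_of_finiteDimensional.comp
            (continuous_const.add (continuous_id.smul continuous_const))
      have hopen : IsOpen {g : Fin (r + 1) → G | LinearIndependent ℝ g} :=
        isOpen_setOf_linearIndependent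
      have hnhds : ∀ᶠ t in nhds (0 : ℝ), LinearIndependent ℝ (f t) :=
        (hopen.preimage hcont).mem_nhds h0
      obtain ⟨ε, hε, hball⟩ := Metric.eventually_nhds_iff.1 hnhds
      set t := ε / 2 with ht
      have htpos : t ≠ 0 := by positivity
      have hli : LinearIndependent ℝ (f t) := by
        apply hball
        rw [Real.dist_eq, sub_zero, ht, abs_of_pos (half_pos hε)]
        linarith
      -- all vectors lie in the range of A (x₀ + t • y)
      have hrange : ∀ i, f t i ∈ LinearMap.range (A (x₀ + t • y)) := by
        intro i
        refine Fin.cases ?_ (fun j => ?_) i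
        · have hAk : A (x₀ + t • y) k = t • A y k := by
            simp [map_add, map_smul, hk]
          have : A y k = t⁻¹ • A (x₀ + t • y) k := by
            rw [hAk, smul_smul, inv_mul_cancel₀ htpos, one_smul]
          rw [hf]
          simp only [Fin.cons_zero]
          rw [this]
          exact Submodule.smul_mem _ _ (LinearMap.mem_range_self _ _)
        · simp only [hf, Fin.cons_succ]
          exact LinearMap.mem_range_self _ _
      have hspan : Submodule.span ℝ (Set.range (f t)) ≤ LinearMap.range (A (x₀ + t • y)) := by
        rw [Submodule.span_le]
        rintro g ⟨i, rfl⟩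
        exact hrange i
      have h1 : finrank ℝ (Submodule.span ℝ (Set.range (f t))) = r + 1 := by
        rw [finrank_span_eq_card hli, Fintype.card_fin]
      have h2 := Submodule.finrank_mono hspan
      rw [h1] at h2
      have := hmax (x₀ + t • y)
      omega
    obtain ⟨w, hw⟩ := hmem
    have : ⟪A y k, A y k⟫ = 0 := by
      calc ⟪A y k, A y k⟫ = ⟪A x₀ w, A y k⟫ := by rw [hw]
        _ = 0 := hperp w
    exact inner_self_eq_zero.1 this
  refine ⟨LinearMap.ker (A x₀), hkey, ?_⟩
  have := LinearMap.finrank_range_add_finrank_ker (A x₀)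
  have h2 : finrank ℝ (LinearMap.range (A x₀)) ≤ finrank ℝ G := Submodule.finrank_le _
  omega


/-- The "nullity subspace" of a bilinear map `β` relative to a subspace `U` of the target:
all `x` such that the orthogonal projection onto `U` of `β x y` vanishes for every `y`. -/
noncomputable def nullitySubspace {V W : Type*} [NormedAddCommGroup V]
    [InnerProductSpace ℝ V] [NormedAddCommGroup W] [InnerProductSpace ℝ W]
    [FiniteDimensional ℝ W] (β : V →ₗ[ℝ] V →ₗ[ℝ] W) (U : Submodule ℝ W) :
    Submodule ℝ V :=
  ⨅ y : V, LinearMap.ker (((U.orthogonalProjectionOnto).toLinearMap).comp (β.flip y))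

theorem stmt_0 {V W : Type*} [NormedAddCommGroup V] [InnerProductSpace ℝ V]
    [FiniteDimensional ℝ V] [NormedAddCommGroup W] [InnerProductSpace ℝ W]
    [FiniteDimensional ℝ W] {n p : ℕ}
    (hn : finrank ℝ V = n) (hp : finrank ℝ W = p)
    (β : V →ₗ[ℝ] V →ₗ[ℝ] W) (hsym : ∀ x y, β x y = β y x)
    (hpn : 2 * p < n)
    (hnull : ∀ s : ℕ, 1 ≤ s → s ≤ p → ∀ U : Submodule ℝ W, finrank ℝ U = s →
      finrank ℝ (nullitySubspace β U) < n - 2 * s)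
    (V₁ V₂ : Submodule ℝ V) (hsplit : V₂ = V₁ᗮ)
    (hR1 : ∀ x ∈ V₁, ∀ y ∈ V₁, ∀ z ∈ V₁, ∀ u ∈ V₂,
      ⟪β x u, β y z⟫ - ⟪β x z, β y u⟫ = 0)
    (hR2 : ∀ x ∈ V₁, ∀ y ∈ V₁, ∀ u ∈ V₂, ∀ v ∈ V₂,
      ⟪β x v, β y u⟫ - ⟪β x u, β y v⟫ = 0)
    (hR3 : ∀ x ∈ V₁, ∀ u ∈ V₂, ∀ v ∈ V₂, ∀ w ∈ V₂,
      ⟪β x w, β u v⟫ - ⟪β x v, β u w⟫ = 0) :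
    Submodule.span ℝ {w : W | ∃ x ∈ V₁, ∃ y ∈ V₂, w = β x y} = ⊥ := by
  classical
  by_contra hU
  set U : Submodule ℝ W := Submodule.span ℝ {w : W | ∃ x ∈ V₁, ∃ y ∈ V₂, w = β x y} with hUdef
  have hmemU : ∀ x ∈ V₁, ∀ u ∈ V₂, β x u ∈ U := fun x hx u hu =>
    Submodule.subset_span ⟨x, hx, u, hu, rfl⟩
  set s := finrank ℝ U with hs
  have hs1 : 1 ≤ s := by
    rcases Nat.eq_zero_or_pos s with h | h
    · exact absurd (Submodule.finrank_eq_zero.1 (hs.symm.trans h)) hU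
    · exact h
  have hsp : s ≤ p := hp ▸ Submodule.finrank_le U
  -- the mixed bilinear map with values in U
  let γ : V₁ →ₗ[ℝ] V₂ →ₗ[ℝ] U := LinearMap.mk₂ ℝ
    (fun x u => ⟨β x u, hmemU x x.2 u u.2⟩)
    (fun x y u => by ext; simp)
    (fun c x u => by ext; simp)
    (fun x u v => by ext; simp)
    (fun c x u => by ext; simp)
  have hγ : ∀ (x : V₁) (u : V₂), (γ x u : W) = β x u := fun x u => rfl
  have hflat : ∀ x y u v, ⟪γ x u, γ y v⟫ = ⟪γ x v, γ y u⟫ := by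
    intro x y u v
    have := hR2 x x.2 y y.2 u u.2 v v.2
    simp only [Submodule.coe_inner, hγ]
    linarith
  have hflat' : ∀ u v x y, ⟪γ.flip u x, γ.flip v y⟫ = ⟪γ.flip u y, γ.flip v x⟫ := by
    intro u v x y
    simp only [LinearMap.flip_apply]
    rw [hflat x y u v, real_inner_comm]
  obtain ⟨N₂, hN₂, hd₂⟩ := flat_key γ hflat
  obtain ⟨N₁, hN₁, hd₁⟩ := flat_key γ.flip hflat'
  -- convert to statements about β
  have hβ₁ : ∀ x ∈ N₁, ∀ u ∈ V₂, β (x : V) u = 0 := by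
    intro x hx u hu
    have h0 := hN₁ ⟨u, hu⟩ x hx
    rw [LinearMap.flip_apply] at h0
    calc β (x : V) u = ((γ x ⟨u, hu⟩ : U) : W) := rfl
      _ = ((0 : U) : W) := by rw [h0]
      _ = 0 := rfl
  have hβ₂ : ∀ u ∈ N₂, ∀ x ∈ V₁, β x (u : V) = 0 := by
    intro u hu x hx
    have h0 := hN₂ ⟨x, hx⟩ u hu
    calc β x (u : V) = ((γ ⟨x, hx⟩ u : U) : W) := rfl
      _ = ((0 : U) : W) := by rw [h0]
      _ = 0 := rfl
  set M₁ : Submodule ℝ V := N₁.map V₁.subtype with hM₁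
  set M₂ : Submodule ℝ V := N₂.map V₂.subtype with hM₂
  -- membership criterion for the nullity subspace
  have hmemN : ∀ z : V, (∀ y : V, ∀ a ∈ V₁, ∀ b ∈ V₂, ⟪β a b, β z y⟫ = 0) →
      z ∈ nullitySubspace β U := by
    intro z hz
    rw [nullitySubspace, Submodule.mem_iInf]
    intro y
    rw [LinearMap.mem_ker, LinearMap.comp_apply, LinearMap.flip_apply]
    have : (β z y : W) ∈ Uᗮ := by
      rw [Submodule.mem_orthogonal]
      intro q hq
      induction hq using Submodule.span_induction with
      | mem w hw => obtain ⟨a, ha, b, hb, rfl⟩ := hw; exact hz y a ha b hb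
      | zero => exact inner_zero_left _
      | add a b _ _ ha hb => rw [inner_add_left, ha, hb, add_zero]
      | smul c a _ ha => rw [real_inner_smul_left, ha, mul_zero]
    simpa using Submodule.orthogonalProjectionOnto_eq_zero_iff.2 this
  have hsub : M₁ ⊔ M₂ ≤ nullitySubspace β U := by
    apply sup_le
    · rintro z ⟨x, hx, rfl⟩
      apply hmemN
      intro y a ha b hb
      simp only [Submodule.subtype_apply]
      obtain ⟨y₁, hy₁, y₂, hy₂, rfl⟩ := V₁.exists_add_mem_mem_orthogonal y
      rw [← hsplit] at hy₂
      have h2 : β (x : V) y₂ = 0 := hβ₁ x hx y₂ hy₂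
      have h1 : ⟪β a b, β (x : V) y₁⟫ = 0 := by
        have h3 := hR1 a ha (x : V) x.2 y₁ hy₁ b hb
        rw [hβ₁ x hx b hb, inner_zero_right] at h3
        linarith
      rw [map_add, inner_add_right, h1, h2, inner_zero_right, add_zero]
    · rintro z ⟨u, hu, rfl⟩
      apply hmemN
      intro y a ha b hb
      simp only [Submodule.subtype_apply]
      obtain ⟨y₁, hy₁, y₂, hy₂, rfl⟩ := V₁.exists_add_mem_mem_orthogonal y
      rw [← hsplit] at hy₂
      have h1 : β (u : V) y₁ = 0 := by
        rw [hsym]; exact hβ₂ u hu y₁ hy₁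
      have h2 : ⟪β a b, β (u : V) y₂⟫ = 0 := by
        rw [hsym (u : V) y₂]
        have h3 := hR3 a ha y₂ hy₂ (u : V) u.2 b hb
        rw [hβ₂ u hu a ha, inner_zero_left] at h3
        linarith
      rw [map_add, inner_add_right, h1, h2, inner_zero_right, add_zero]
  -- dimension count
  have hdisj : Disjoint M₁ M₂ := by
    have h1 : M₁ ≤ V₁ := Submodule.map_subtype_le _ _
    have h2 : M₂ ≤ V₁ᗮ := hsplit ▸ Submodule.map_subtype_le V₂ N₂
    exact (Submodule.orthogonal_disjoint V₁).mono h1 h2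
  have hfin : finrank ℝ (M₁ ⊔ M₂ : Submodule ℝ V) = finrank ℝ N₁ + finrank ℝ N₂ := by
    have := Submodule.finrank_sup_add_finrank_inf_eq M₁ M₂
    rw [hdisj.eq_bot, finrank_bot, add_zero] at this
    rw [this, Submodule.finrank_map_subtype_eq, Submodule.finrank_map_subtype_eq]
  have hmono : finrank ℝ (M₁ ⊔ M₂ : Submodule ℝ V) ≤ finrank ℝ (nullitySubspace β U) :=
    Submodule.finrank_mono hsub
  have hVsum : finrank ℝ V₁ + finrank ℝ V₂ = n := by
    rw [hsplit, ← hn]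
    exact Submodule.finrank_add_finrank_orthogonal V₁
  have hlt := hnull s hs1 hsp U rfl
  omega
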